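/- Let A be a finite nonempty subset of an abelian group, let K be a real number with |A+A| = K·|A|, and let λ₁, …, λ_h be nonzero integers. Let r = maxᵢ ⌊log₂|λᵢ|⌋, and for each i let sᵢ denote the number of ones in the binary expansion of |λᵢ| (i.e., the number of indices j with 0 ≤ j ≤ r such that the coefficient of 2^j in the binary expansion of |λᵢ| equals 1). Then |λ₁·A + λ₂·A + … + λ_h·A| ≤ K^(7 + 10r + 2·Σᵢ sᵢ) · |A|. -/

import Mathlib

open Pointwise

/-- The dilate `λ · A = {λa : a ∈ A}` of a finite set in an abelian group. -/
def dilate {G : Type} [AddCommGroup G] [DecidableEq G] (l : ℤ) (A : Finset G) : Finset G :=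
  A.image fun a => l • a

namespace BukhAux

open Finset

variable {G : Type} [AddCommGroup G] [DecidableEq G]

lemma dilate_nonempty {l : ℤ} {A : Finset G} (hA : A.Nonempty) : (dilate l A).Nonempty :=
  hA.image _

lemma dilate_one (A : Finset G) : dilate 1 A = A := by simp [dilate]

lemma dilate_neg_one (A : Finset G) : dilate (-1) A = -A := by
  have : dilate (-1) A = A.image fun a => -a := by
    simp [dilate]
  rw [this]
  exact Finset.image_neg_eq_neg A

lemma dilate_zero {A : Finset G} (hA : A.Nonempty) : dilate 0 A = 0 := by
  simp only [dilate, zero_smul]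
  rw [Finset.image_const hA]
  rfl

lemma dilate_zero_finset (l : ℤ) : dilate l (0 : Finset G) = 0 := by
  have : (0 : Finset G) = {0} := rfl
  rw [this]
  simp [dilate]

lemma dilate_mul (l m : ℤ) (A : Finset G) : dilate (l * m) A = dilate l (dilate m A) := by
  rw [dilate, dilate, dilate, Finset.image_image]
  simp [Function.comp_def, mul_smul]

lemma dilate_add (l : ℤ) (X Y : Finset G) : dilate l (X + Y) = dilate l X + dilate l Y := by
  ext x
  simp only [dilate, Finset.mem_image, Finset.mem_add]
  constructor
  · rintro ⟨a, ⟨u, hu, v, hv, rfl⟩, rfl⟩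
    exact ⟨_, ⟨u, hu, rfl⟩, _, ⟨v, hv, rfl⟩, (smul_add l u v).symm⟩
  · rintro ⟨_, ⟨u, hu, rfl⟩, _, ⟨v, hv, rfl⟩, rfl⟩
    exact ⟨u + v, ⟨u, hu, v, hv, rfl⟩, smul_add l u v⟩

lemma dilate_sum {ι : Type} (l : ℤ) (I : Finset ι) (f : ι → Finset G) :
    dilate l (∑ i ∈ I, f i) = ∑ i ∈ I, dilate l (f i) := by
  classical
  induction I using Finset.cons_induction with
  | empty => simpa using dilate_zero_finset l
  | cons i I hi ih => rw [Finset.sum_cons, Finset.sum_cons, dilate_add, ih]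

lemma sum_nonempty' {ι : Type} (I : Finset ι) (f : ι → Finset G)
    (h : ∀ i ∈ I, (f i).Nonempty) : (∑ i ∈ I, f i).Nonempty := by
  classical
  induction I using Finset.cons_induction with
  | empty => exact ⟨0, Finset.zero_mem_zero⟩
  | cons i I hi ih =>
      rw [Finset.sum_cons]
      exact (h i (Finset.mem_cons_self i I)).add
        (ih fun j hj => h j (Finset.mem_cons.2 (Or.inr hj)))

lemma sum_subset_add {ι : Type} (I : Finset ι) (f g h : ι → Finset G)
    (hsub : ∀ i ∈ I, f i ⊆ g i + h i) :
    ∑ i ∈ I, f i ⊆ (∑ i ∈ I, g i) + ∑ i ∈ I, h i := by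
  classical
  induction I using Finset.cons_induction with
  | empty => simp
  | cons i I hi ih =>
      rw [Finset.sum_cons, Finset.sum_cons, Finset.sum_cons, add_add_add_comm]
      exact Finset.add_subset_add (hsub i (Finset.mem_cons_self i I))
        (ih fun j hj => hsub j (Finset.mem_cons.2 (Or.inr hj)))

/-- Digit removal: each `±A` summand can be absorbed at cost `K²`. -/
lemma remove_digits {ι : Type} (A A₀ : Finset G) (K : ℝ) (hK1 : 1 ≤ K)
    (hP : ∀ C : Finset G, (#(A₀ + A + C) : ℝ) ≤ K * #(A₀ + C))
    (hN : ∀ W : Finset G, (#(A₀ + W + -A) : ℝ) ≤ K ^ 2 * #(A₀ + W))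
    (J : Finset ι) (σ : ι → ℤ) (hσ : ∀ i ∈ J, σ i = 1 ∨ σ i = -1)
    (W : Finset G) :
    (#(A₀ + (∑ i ∈ J, dilate (σ i) A) + W) : ℝ) ≤ K ^ (2 * #J) * #(A₀ + W) := by
  classical
  have hK0 : (0 : ℝ) < K := zero_lt_one.trans_le hK1
  revert hσ
  induction J using Finset.cons_induction with
  | empty => intro _; simp
  | cons i J hi ih =>
      intro hσ
      set W' := (∑ j ∈ J, dilate (σ j) A) + W with hW'def
      have key : (#(A₀ + dilate (σ i) A + W') : ℝ) ≤ K ^ 2 * #(A₀ + W') := by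
        rcases hσ i (Finset.mem_cons_self i J) with h1 | h1
        · rw [h1, dilate_one]
          calc (#(A₀ + A + W') : ℝ) ≤ K * #(A₀ + W') := hP W'
            _ ≤ K ^ 2 * #(A₀ + W') := by
                have h2 : K ≤ K ^ 2 := by nlinarith
                have h3 : (0 : ℝ) ≤ (#(A₀ + W') : ℝ) := Nat.cast_nonneg _
                nlinarith
        · rw [h1, dilate_neg_one]
          calc (#(A₀ + -A + W') : ℝ) = #(A₀ + W' + -A) := by
                rw [show A₀ + -A + W' = A₀ + W' + -A by
                  simp only [add_comm, add_left_comm, add_assoc]]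
            _ ≤ K ^ 2 * #(A₀ + W') := hN W'
      have hrearr : A₀ + (∑ j ∈ Finset.cons i J hi, dilate (σ j) A) + W
          = A₀ + dilate (σ i) A + W' := by
        rw [Finset.sum_cons, hW'def]
        simp only [add_comm, add_left_comm, add_assoc]
      rw [hrearr]
      have hih := ih (fun j hj => hσ j (Finset.mem_cons.2 (Or.inr hj)))
      have hih' : (#(A₀ + W') : ℝ) ≤ K ^ (2 * #J) * #(A₀ + W) := by
        rw [hW'def, ← add_assoc]
        exact hih
      calc (#(A₀ + dilate (σ i) A + W') : ℝ) ≤ K ^ 2 * #(A₀ + W') := key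
        _ ≤ K ^ 2 * (K ^ (2 * #J) * #(A₀ + W)) := by
            apply mul_le_mul_of_nonneg_left hih' (by positivity)
        _ = K ^ (2 * #(Finset.cons i J hi)) * #(A₀ + W) := by
            rw [← mul_assoc, ← pow_add, Finset.card_cons]
            congr 2
            omega

/-- The key doubling lemma: `|A₀ + 2·Z| ≤ K⁶ |A₀ + Z|`. -/
lemma doubling (A A₀ : Finset G) (K : ℝ) (hA : A.Nonempty) (hA₀ : A₀.Nonempty)
    (hA₀A : A₀ ⊆ A) (hK1 : 1 ≤ K)
    (h₀A : (#(A₀ + A) : ℝ) ≤ K * #A₀)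
    (hP : ∀ C : Finset G, (#(A₀ + A + C) : ℝ) ≤ K * #(A₀ + C))
    (hN : ∀ W : Finset G, (#(A₀ + W + -A) : ℝ) ≤ K ^ 2 * #(A₀ + W))
    (Z : Finset G) :
    (#(A₀ + dilate 2 Z) : ℝ) ≤ K ^ 6 * #(A₀ + Z) := by
  classical
  rcases Z.eq_empty_or_nonempty with rfl | hZ
  · have h0 : dilate 2 (∅ : Finset G) = ∅ := rfl
    rw [h0]
    simp only [Finset.add_empty, Finset.card_empty, Nat.cast_zero, mul_zero, le_refl]
  have hK0 : (0 : ℝ) < K := zero_lt_one.trans_le hK1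
  have hApos : (0 : ℝ) < #A := by exact_mod_cast Finset.card_pos.2 hA
  have hA₀pos : (0 : ℝ) < #A₀ := by exact_mod_cast Finset.card_pos.2 hA₀
  set B := dilate 2 A with hBdef
  have hBne : B.Nonempty := hA.image _
  have hBpos : (0 : ℝ) < #B := by exact_mod_cast Finset.card_pos.2 hBne
  -- maximal fiber of the doubling map on A
  obtain ⟨v0, hv0B, hv0max⟩ :=
    Finset.exists_max_image B (fun v => #(A.filter fun a => (2 : ℤ) • a = v)) hBne
  set P := A.filter (fun a => (2 : ℤ) • a = v0) with hPdef
  have hPA : P ⊆ A := Finset.filter_subset _ _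
  have hPne : P.Nonempty := by
    obtain ⟨a, ha, hav⟩ := Finset.mem_image.1 hv0B
    exact ⟨a, Finset.mem_filter.2 ⟨ha, hav⟩⟩
  set k := #P with hkdef
  have hk0 : 0 < k := Finset.card_pos.2 hPne
  have hkpos : (0 : ℝ) < k := by exact_mod_cast hk0
  -- (i) |A| ≤ k |B|
  have hi1 : #A ≤ k * #B := by
    have h0 : #A = ∑ v ∈ B, #(A.filter fun a => (2 : ℤ) • a = v) :=
      Finset.card_eq_sum_card_fiberwise (fun a ha => Finset.mem_image_of_mem _ ha)
    rw [h0]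
    calc ∑ v ∈ B, #(A.filter fun a => (2 : ℤ) • a = v) ≤ ∑ _v ∈ B, k :=
          Finset.sum_le_sum fun v hv => hv0max v hv
      _ = #B * k := by rw [Finset.sum_const, smul_eq_mul]
      _ = k * #B := mul_comm _ _
  -- (ii) k |2·X| ≤ |X + P| for all X
  have hi2 : ∀ X : Finset G, #(dilate 2 X) * k ≤ #(X + P) := by
    intro X
    rw [hkdef, ← Finset.card_product]
    set g : G → G := fun v => if h : ∃ x ∈ X, (2 : ℤ) • x = v then h.choose else 0 with hg
    have hgmem : ∀ v ∈ dilate 2 X, g v ∈ X ∧ (2 : ℤ) • (g v) = v := by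
      intro v hv
      obtain ⟨x, hx, hxv⟩ := Finset.mem_image.1 hv
      have hex : ∃ x ∈ X, (2 : ℤ) • x = v := ⟨x, hx, hxv⟩
      rw [hg]
      simp only [dif_pos hex]
      exact ⟨hex.choose_spec.1, hex.choose_spec.2⟩
    apply Finset.card_le_card_of_injOn (fun q => g q.1 + q.2)
    · rintro ⟨v, p⟩ hq
      rw [Finset.mem_coe, Finset.mem_product] at hq
      exact Finset.add_mem_add (hgmem v hq.1).1 hq.2
    · rintro ⟨v, p⟩ hq ⟨w, q'⟩ hr heq
      rw [Finset.mem_coe, Finset.mem_product] at hq hr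
      simp only at heq
      have h2p : (2 : ℤ) • p = v0 := (Finset.mem_filter.1 hq.2).2
      have h2q : (2 : ℤ) • q' = v0 := (Finset.mem_filter.1 hr.2).2
      have hv : (2 : ℤ) • (g v + p) = v + v0 := by
        rw [smul_add, (hgmem v hq.1).2, h2p]
      have hw : (2 : ℤ) • (g w + q') = w + v0 := by
        rw [smul_add, (hgmem w hr.1).2, h2q]
      have hvw : v = w := by
        have : v + v0 = w + v0 := by rw [← hv, ← hw, heq]
        exact add_right_cancel this
      have hpq : p = q' := by
        rw [hvw] at heq
        exact add_left_cancel heq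
      exact Prod.ext hvw hpq
  -- (iii) Ruzsa covering of A₀ by translates of B - B
  have hcovhyp : (#(A₀ + B) : ℝ) ≤ (#(A₀ + B) / #B) * #B := by
    exact (div_mul_cancel₀ _ hBpos.ne').ge
  obtain ⟨F, hFA₀, hFcard, hcov⟩ := Finset.ruzsa_covering_add hBne hcovhyp
  -- the main subset relation
  set X := A + -A + Z with hXdef
  have hsub : A₀ + dilate 2 Z ⊆ F + dilate 2 X := by
    intro x hx
    obtain ⟨u, hu, w, hw, rfl⟩ := Finset.mem_add.1 hx
    obtain ⟨f, hf, d, hd, rfl⟩ := Finset.mem_add.1 (hcov hu)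
    obtain ⟨a1, ha1, a2, ha2, rfl⟩ := Finset.mem_sub.1 hd
    obtain ⟨z, hz', rfl⟩ := Finset.mem_image.1 hw
    obtain ⟨b1, hb1, rfl⟩ := Finset.mem_image.1 ha1
    obtain ⟨b2, hb2, rfl⟩ := Finset.mem_image.1 ha2
    refine Finset.mem_add.2 ⟨f, hf, (2 : ℤ) • (b1 + -b2 + z), ?_, ?_⟩
    · exact Finset.mem_image_of_mem _
        (Finset.add_mem_add (Finset.add_mem_add hb1 (Finset.neg_mem_neg hb2)) hz')
    · simp only [smul_add, smul_neg]
      abel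
  have c1 : (#(A₀ + dilate 2 Z) : ℝ) ≤ #F * #(dilate 2 X) := by
    calc (#(A₀ + dilate 2 Z) : ℝ) ≤ #(F + dilate 2 X) := by
          exact_mod_cast Finset.card_le_card hsub
      _ ≤ #F * #(dilate 2 X) := by exact_mod_cast Finset.card_add_le
  -- bound |A₀ + B| ≤ K² |A₀|
  have c3 : (#(A₀ + B) : ℝ) ≤ K ^ 2 * #A₀ := by
    have hBsub : B ⊆ A + A := by
      intro b hb
      obtain ⟨a, ha, rfl⟩ := Finset.mem_image.1 hb
      exact Finset.mem_add.2 ⟨a, ha, a, ha, (two_zsmul a).symm⟩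
    have h1 : #(A₀ + B) ≤ #(A₀ + A + A) := by
      apply Finset.card_le_card
      rw [add_assoc]
      exact Finset.add_subset_add_left hBsub
    calc (#(A₀ + B) : ℝ) ≤ #(A₀ + A + A) := by exact_mod_cast h1
      _ ≤ K * #(A₀ + A) := hP A
      _ ≤ K * (K * #A₀) := by
          apply mul_le_mul_of_nonneg_left h₀A (le_of_lt hK0)
      _ = K ^ 2 * #A₀ := by ring
  -- bound k * |2·X| ≤ K⁴ |A₀ + Z|
  have c2 : (k : ℝ) * #(dilate 2 X) ≤ K ^ 4 * #(A₀ + Z) := by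
    have h1 : (#(dilate 2 X) : ℝ) * k ≤ #(X + P) := by exact_mod_cast hi2 X
    have h2 : (#(X + P) : ℝ) ≤ #(X + A) := by
      exact_mod_cast Finset.card_le_card (Finset.add_subset_add_left hPA)
    -- |X + A| ≤ K |A₀ + (-A + Z + A)|
    have h3 : (#(X + A) : ℝ) * #A₀ ≤ (#(A + A₀) : ℝ) * #(A₀ + (-A + Z + A)) := by
      have hXA : X + A = A + (-A + Z + A) := by
        rw [hXdef]
        simp only [add_comm, add_left_comm, add_assoc]
      rw [hXA]
      exact_mod_cast Finset.ruzsa_triangle_inequality_add_add_add A A₀ (-A + Z + A)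
    have h4 : (#(A + A₀) : ℝ) ≤ K * #A₀ := by
      rw [add_comm]
      exact h₀A
    -- |A₀ + (-A + Z + A)| ≤ K³ |A₀ + Z|
    have h5 : (#(A₀ + (-A + Z + A)) : ℝ) ≤ K ^ 3 * #(A₀ + Z) := by
      have hre : A₀ + (-A + Z + A) = A₀ + (Z + A) + -A := by
        simp only [add_comm, add_left_comm, add_assoc]
      rw [hre]
      calc (#(A₀ + (Z + A) + -A) : ℝ) ≤ K ^ 2 * #(A₀ + (Z + A)) := hN (Z + A)
        _ ≤ K ^ 2 * (K * #(A₀ + Z)) := by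
            apply mul_le_mul_of_nonneg_left _ (by positivity)
            have hre2 : A₀ + (Z + A) = A₀ + A + Z := by
              simp only [add_comm, add_left_comm, add_assoc]
            rw [hre2]
            exact hP Z
        _ = K ^ 3 * #(A₀ + Z) := by ring
    have h6 : (#(X + A) : ℝ) ≤ K ^ 4 * #(A₀ + Z) := by
      have h7 : (#(X + A) : ℝ) * #A₀ ≤ (K * #A₀) * (K ^ 3 * #(A₀ + Z)) := by
        calc (#(X + A) : ℝ) * #A₀ ≤ (#(A + A₀) : ℝ) * #(A₀ + (-A + Z + A)) := h3
          _ ≤ (K * #A₀) * (K ^ 3 * #(A₀ + Z)) := by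
              apply mul_le_mul h4 h5 (Nat.cast_nonneg _) (by positivity)
      have h8 : (#(X + A) : ℝ) * #A₀ ≤ (K ^ 4 * #(A₀ + Z)) * #A₀ := by
        calc (#(X + A) : ℝ) * #A₀ ≤ (K * #A₀) * (K ^ 3 * #(A₀ + Z)) := h7
          _ = (K ^ 4 * #(A₀ + Z)) * #A₀ := by ring
      exact le_of_mul_le_mul_right h8 hA₀pos
    calc (k : ℝ) * #(dilate 2 X) = #(dilate 2 X) * k := mul_comm _ _
      _ ≤ #(X + P) := h1
      _ ≤ #(X + A) := h2
      _ ≤ K ^ 4 * #(A₀ + Z) := h6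
  -- combine everything
  have e5 : (#A : ℝ) ≤ k * #B := by exact_mod_cast hi1
  have e6 : (#A₀ : ℝ) ≤ #A := by exact_mod_cast Finset.card_le_card hA₀A
  have hD0 : (0 : ℝ) ≤ #(dilate 2 X) := Nat.cast_nonneg _
  have hDle : (#(dilate 2 X) : ℝ) ≤ K ^ 4 * #(A₀ + Z) / k := by
    rw [le_div_iff₀ hkpos]
    calc (#(dilate 2 X) : ℝ) * k = k * #(dilate 2 X) := mul_comm _ _
      _ ≤ K ^ 4 * #(A₀ + Z) := c2
  calc (#(A₀ + dilate 2 Z) : ℝ) ≤ #F * #(dilate 2 X) := c1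
    _ ≤ (#(A₀ + B) / #B) * #(dilate 2 X) := by
        apply mul_le_mul_of_nonneg_right hFcard hD0
    _ ≤ (K ^ 2 * #A₀ / #B) * (K ^ 4 * #(A₀ + Z) / k) := by
        apply mul_le_mul _ hDle hD0 (by positivity)
        have := c3
        exact div_le_div_of_nonneg_right c3 hBpos.le
    _ = K ^ 6 * #(A₀ + Z) * (#A₀ / (k * #B)) := by
        field_simp
    _ ≤ K ^ 6 * #(A₀ + Z) * 1 := by
        apply mul_le_mul_of_nonneg_left _ (by positivity)
        rw [div_le_one (by positivity)]
        exact e6.trans e5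
    _ = K ^ 6 * #(A₀ + Z) := mul_one _

/-- The main induction on the number of binary digits. -/
lemma main_induction {ι : Type} [DecidableEq ι] (A A₀ : Finset G) (K : ℝ)
    (hA : A.Nonempty) (hK1 : 1 ≤ K)
    (hP : ∀ C : Finset G, (#(A₀ + A + C) : ℝ) ≤ K * #(A₀ + C))
    (hN : ∀ W : Finset G, (#(A₀ + W + -A) : ℝ) ≤ K ^ 2 * #(A₀ + W))
    (hDbl : ∀ Z : Finset G, (#(A₀ + dilate 2 Z) : ℝ) ≤ K ^ 6 * #(A₀ + Z)) :
    ∀ (r : ℕ) (I : Finset ι) (lam : ι → ℤ),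
      (∀ i ∈ I, lam i ≠ 0) → (∀ i ∈ I, Nat.log 2 (lam i).natAbs ≤ r) →
      (#(A₀ + ∑ i ∈ I, dilate (lam i) A) : ℝ) ≤
        K ^ (6 * r + 2 * ∑ i ∈ I, (Nat.digits 2 (lam i).natAbs).sum) * #A₀ := by
  intro r
  induction r using Nat.strong_induction_on with
  | _ r ih =>
  intro I lam hne hlog
  classical
  have hK0 : (0 : ℝ) < K := zero_lt_one.trans_le hK1
  set n : ι → ℕ := fun i => (lam i).natAbs with hn
  set e : ι → ℤ := fun i => (lam i).sign * (n i % 2 : ℕ) with he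
  set mu : ι → ℤ := fun i => (lam i).sign * (n i / 2 : ℕ) with hmu
  show (#(A₀ + ∑ i ∈ I, dilate (lam i) A) : ℝ) ≤
    K ^ (6 * r + 2 * ∑ i ∈ I, (Nat.digits 2 (n i)).sum) * #A₀
  have hlameq : ∀ i, lam i = e i + 2 * mu i := by
    intro i
    have h2 : ((n i % 2 : ℕ) : ℤ) + 2 * ((n i / 2 : ℕ) : ℤ) = (n i : ℤ) := by
      push_cast
      omega
    calc lam i = (lam i).sign * (n i : ℤ) := (Int.sign_mul_natAbs (lam i)).symm
      _ = (lam i).sign * (((n i % 2 : ℕ) : ℤ) + 2 * ((n i / 2 : ℕ) : ℤ)) := by rw [h2]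
      _ = e i + 2 * mu i := by rw [he, hmu]; ring
  have hdecomp : ∀ i ∈ I, dilate (lam i) A ⊆ dilate (e i) A + dilate (2 * mu i) A := by
    intro i _ x hx
    obtain ⟨a, ha, rfl⟩ := Finset.mem_image.1 hx
    refine Finset.mem_add.2 ⟨e i • a, Finset.mem_image_of_mem _ ha,
      (2 * mu i) • a, Finset.mem_image_of_mem _ ha, ?_⟩
    rw [← add_zsmul, ← hlameq i]
  set I₁ := I.filter (fun i => n i % 2 = 1) with hI₁
  set I₂ := I.filter (fun i => n i / 2 ≠ 0) with hI₂
  have hE : ∑ i ∈ I₁, dilate (e i) A = ∑ i ∈ I, dilate (e i) A := by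
    apply Finset.sum_subset (Finset.filter_subset _ _)
    intro i hiI hiI₁
    have h0 : n i % 2 = 0 := by
      simp only [Finset.mem_filter] at hiI₁
      push_neg at hiI₁
      have := hiI₁ hiI
      omega
    have : e i = 0 := by rw [he]; simp [h0]
    rw [this]
    exact dilate_zero hA
  have hM : ∑ i ∈ I, dilate (2 * mu i) A = dilate 2 (∑ i ∈ I₂, dilate (mu i) A) := by
    rw [dilate_sum]
    have hcongr : ∀ i ∈ I, dilate (2 * mu i) A = dilate 2 (dilate (mu i) A) :=
      fun i _ => dilate_mul 2 (mu i) A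
    rw [Finset.sum_congr rfl hcongr]
    symm
    apply Finset.sum_subset (Finset.filter_subset _ _)
    intro i hiI hiI₂
    have h0 : n i / 2 = 0 := by
      simp only [Finset.mem_filter] at hiI₂
      push_neg at hiI₂
      exact hiI₂ hiI
    have hmu0 : mu i = 0 := by
      have hrfl : mu i = (lam i).sign * ((n i / 2 : ℕ) : ℤ) := rfl
      rw [hrfl, h0]
      simp
    rw [hmu0, dilate_zero hA, dilate_zero_finset]
  set Z := ∑ i ∈ I₂, dilate (mu i) A with hZdef
  have hZne : Z.Nonempty := sum_nonempty' _ _ (fun i _ => dilate_nonempty hA)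
  have hsgn : ∀ i ∈ I, (lam i).sign = 1 ∨ (lam i).sign = -1 := by
    intro i hi
    rcases lt_trichotomy (lam i) 0 with h | h | h
    · right; exact Int.sign_eq_neg_one_of_neg h
    · exact absurd h (hne i hi)
    · left; exact Int.sign_eq_one_of_pos h
  have hstep1 : (#(A₀ + ∑ i ∈ I, dilate (lam i) A) : ℝ) ≤
      K ^ (2 * #I₁) * #(A₀ + dilate 2 Z) := by
    have hsub1 : ∑ i ∈ I, dilate (lam i) A ⊆
        (∑ i ∈ I₁, dilate (e i) A) + dilate 2 Z := by
      rw [hE, hZdef, ← hM]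
      exact sum_subset_add I _ _ _ hdecomp
    calc (#(A₀ + ∑ i ∈ I, dilate (lam i) A) : ℝ)
        ≤ #(A₀ + ((∑ i ∈ I₁, dilate (e i) A) + dilate 2 Z)) := by
          exact_mod_cast Finset.card_le_card (Finset.add_subset_add_left hsub1)
      _ = #(A₀ + (∑ i ∈ I₁, dilate (e i) A) + dilate 2 Z) := by rw [add_assoc]
      _ ≤ K ^ (2 * #I₁) * #(A₀ + dilate 2 Z) := by
          apply remove_digits A A₀ K hK1 hP hN I₁ e _ (dilate 2 Z)
          intro i hi
          have hiI : i ∈ I := Finset.filter_subset _ _ hi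
          have hodd : n i % 2 = 1 := (Finset.mem_filter.1 hi).2
          rcases hsgn i hiI with h | h
          · left; rw [he]; simp [h, hodd]
          · right; rw [he]; simp [h, hodd]
  have hsum : ∑ i ∈ I, (Nat.digits 2 (n i)).sum
      = #I₁ + ∑ i ∈ I₂, (Nat.digits 2 (n i / 2)).sum := by
    have h1 : ∀ i ∈ I, (Nat.digits 2 (n i)).sum = n i % 2 + (Nat.digits 2 (n i / 2)).sum := by
      intro i hi
      have hni : 0 < n i := Int.natAbs_pos.2 (hne i hi)
      rw [Nat.digits_def' (by norm_num : 1 < 2) hni]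
      simp
    rw [Finset.sum_congr rfl h1, Finset.sum_add_distrib]
    congr 1
    · rw [hI₁, Finset.card_filter]
      apply Finset.sum_congr rfl
      intro i _
      split_ifs with hcase
      · omega
      · omega
    · symm
      apply Finset.sum_subset (Finset.filter_subset _ _)
      intro i hiI hiI₂
      have h0 : n i / 2 = 0 := by
        simp only [Finset.mem_filter] at hiI₂
        push_neg at hiI₂
        exact hiI₂ hiI
      simp [h0]
  rcases Finset.eq_empty_or_nonempty I₂ with hI₂e | hI₂ne
  · -- base: all |λᵢ| = 1
    have hZ0 : Z = 0 := by rw [hZdef, hI₂e, Finset.sum_empty]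
    have hd0 : dilate 2 Z = 0 := by rw [hZ0]; exact dilate_zero_finset 2
    rw [hd0, add_zero] at hstep1
    refine hstep1.trans ?_
    apply mul_le_mul_of_nonneg_right (pow_le_pow_right₀ hK1 ?_) (Nat.cast_nonneg _)
    have h1 : #I₁ ≤ ∑ i ∈ I, (Nat.digits 2 (n i)).sum := by
      rw [hsum, hI₂e]
      simp
    omega
  · -- recursive case
    obtain ⟨i₀, hi₀⟩ := hI₂ne
    have hr1 : 1 ≤ r := by
      have hi₀I : i₀ ∈ I := Finset.filter_subset _ _ hi₀
      have h2 : 2 ≤ n i₀ := by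
        have := (Finset.mem_filter.1 hi₀).2
        omega
      have hlpos : 0 < Nat.log 2 (n i₀) := Nat.log_pos (by norm_num) h2
      have hl2 : Nat.log 2 (n i₀) ≤ r := hlog i₀ hi₀I
      omega
    have hmuabs : ∀ i ∈ I, (mu i).natAbs = n i / 2 := by
      intro i hi
      have hrfl : mu i = (lam i).sign * ((n i / 2 : ℕ) : ℤ) := rfl
      rw [hrfl, Int.natAbs_mul, Int.natAbs_sign_of_ne_zero (hne i hi), Int.natAbs_natCast, one_mul]
    have hmune : ∀ i ∈ I₂, mu i ≠ 0 := by
      intro i hi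
      have hiI : i ∈ I := Finset.filter_subset _ _ hi
      have hd : n i / 2 ≠ 0 := (Finset.mem_filter.1 hi).2
      intro hc
      apply hd
      rw [← hmuabs i hiI, hc, Int.natAbs_zero]
    have hlog' : ∀ i ∈ I₂, Nat.log 2 (mu i).natAbs ≤ r - 1 := by
      intro i hi
      have hiI : i ∈ I := Finset.filter_subset _ _ hi
      rw [hmuabs i hiI]
      have h1 : Nat.log 2 (n i / 2) = Nat.log 2 (n i) - 1 := Nat.log_div_base 2 (n i)
      have h2 : Nat.log 2 (n i) ≤ r := hlog i hiI
      omega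
    have hih := ih (r - 1) (by omega) I₂ mu hmune hlog'
    have hihsum : ∑ i ∈ I₂, (Nat.digits 2 (mu i).natAbs).sum
        = ∑ i ∈ I₂, (Nat.digits 2 (n i / 2)).sum :=
      Finset.sum_congr rfl (fun i hi => by rw [hmuabs i (Finset.filter_subset _ _ hi)])
    rw [hihsum, ← hZdef] at hih
    have hcomb : K ^ (2 * #I₁) * (K ^ 6 *
        (K ^ (6 * (r - 1) + 2 * ∑ i ∈ I₂, (Nat.digits 2 (n i / 2)).sum) * (#A₀ : ℝ)))
        = K ^ (2 * #I₁ + 6 + (6 * (r - 1) + 2 * ∑ i ∈ I₂, (Nat.digits 2 (n i / 2)).sum))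
          * (#A₀ : ℝ) := by
      ring
    calc (#(A₀ + ∑ i ∈ I, dilate (lam i) A) : ℝ)
        ≤ K ^ (2 * #I₁) * #(A₀ + dilate 2 Z) := hstep1
      _ ≤ K ^ (2 * #I₁) * (K ^ 6 * #(A₀ + Z)) := by
          apply mul_le_mul_of_nonneg_left (hDbl Z) (by positivity)
      _ ≤ K ^ (2 * #I₁) * (K ^ 6 *
            (K ^ (6 * (r - 1) + 2 * ∑ i ∈ I₂, (Nat.digits 2 (n i / 2)).sum) * #A₀)) := by
          apply mul_le_mul_of_nonneg_left _ (by positivity)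
          apply mul_le_mul_of_nonneg_left hih (by positivity)
      _ = K ^ (2 * #I₁ + 6 + (6 * (r - 1) + 2 * ∑ i ∈ I₂, (Nat.digits 2 (n i / 2)).sum))
            * #A₀ := hcomb
      _ ≤ K ^ (6 * r + 2 * ∑ i ∈ I, (Nat.digits 2 (n i)).sum) * #A₀ := by
          apply mul_le_mul_of_nonneg_right (pow_le_pow_right₀ hK1 _) (Nat.cast_nonneg _)
          omega

end BukhAux

open Finset BukhAux in
/-- Bukh's theorem, binary-digit form: with `r = maxᵢ ⌊log₂ |λᵢ|⌋` and `sᵢ` the number of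
ones in the binary expansion of `|λᵢ|`, if `|A+A| = K|A|` then
`|λ₁·A + ⋯ + λ_h·A| ≤ K^(7 + 10r + 2∑ᵢ sᵢ) |A|`. -/
theorem bukh_sum_of_dilates_binary {G : Type} [AddCommGroup G] [DecidableEq G]
    (A : Finset G) (hA : A.Nonempty) (K : ℝ) (h : ℕ) (lam : Fin h → ℤ)
    (hlam : ∀ i, lam i ≠ 0)
    (hK : ((A + A).card : ℝ) = K * A.card)
    (r : ℕ) (hr : r = Finset.univ.sup fun i => Nat.log 2 (lam i).natAbs)
    (s : Fin h → ℕ) (hs : ∀ i, s i = (Nat.digits 2 (lam i).natAbs).sum) :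
    ((∑ i, dilate (lam i) A).card : ℝ) ≤ K ^ (7 + 10 * r + 2 * ∑ i, s i) * A.card := by
  classical
  have hApos : (0 : ℝ) < #A := by exact_mod_cast Finset.card_pos.2 hA
  have hK1 : 1 ≤ K := by
    have h1 : (#A : ℝ) ≤ #(A + A) := by
      exact_mod_cast Finset.card_le_card_add_left hA
    rw [hK] at h1
    nlinarith
  have hK0 : (0 : ℝ) < K := zero_lt_one.trans_le hK1
  -- choose the Petridis set A₀
  have hAmem : A ∈ A.powerset.erase ∅ :=
    Finset.mem_erase_of_ne_of_mem hA.ne_empty (Finset.mem_powerset_self _)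
  obtain ⟨A₀, hA₀mem, hmin⟩ := Finset.exists_min_image (A.powerset.erase ∅)
    (fun C => (#(C + A) : ℝ) / #C) ⟨A, hAmem⟩
  rw [Finset.mem_erase, Finset.mem_powerset] at hA₀mem
  have hA₀ne : A₀.Nonempty := Finset.nonempty_iff_ne_empty.2 hA₀mem.1
  have hA₀A : A₀ ⊆ A := hA₀mem.2
  have hA₀pos : (0 : ℝ) < #A₀ := by exact_mod_cast Finset.card_pos.2 hA₀ne
  have h₀A : (#(A₀ + A) : ℝ) ≤ K * #A₀ := by
    have h2 := hmin A hAmem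
    rw [div_le_div_iff₀ hA₀pos hApos] at h2
    rw [hK] at h2
    nlinarith
  have hPcond : ∀ A' ⊆ A₀, #(A₀ + A) * #A' ≤ #(A' + A) * #A₀ := by
    intro A' hA'
    rcases A'.eq_empty_or_nonempty with rfl | hA'ne
    · simp
    · have hmem : A' ∈ A.powerset.erase ∅ :=
        Finset.mem_erase_of_ne_of_mem hA'ne.ne_empty
          (Finset.mem_powerset.2 (hA'.trans hA₀A))
      have h2 := hmin A' hmem
      have hA'pos : (0 : ℝ) < #A' := by exact_mod_cast Finset.card_pos.2 hA'ne
      rw [div_le_div_iff₀ hA₀pos hA'pos] at h2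
      exact_mod_cast h2
  have hP : ∀ C : Finset G, (#(A₀ + A + C) : ℝ) ≤ K * #(A₀ + C) := by
    intro C
    have h1 := Finset.pluennecke_petridis_inequality_add C hPcond
    have h2 : (#(A₀ + A + C) : ℝ) * #A₀ ≤ (#(A₀ + A) : ℝ) * #(A₀ + C) := by
      rw [add_comm C A₀, add_right_comm A₀ C A] at h1
      exact_mod_cast h1
    have h3 : (#(A₀ + A + C) : ℝ) * #A₀ ≤ (K * #(A₀ + C)) * #A₀ := by
      calc (#(A₀ + A + C) : ℝ) * #A₀ ≤ (#(A₀ + A) : ℝ) * #(A₀ + C) := h2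
        _ ≤ (K * #A₀) * #(A₀ + C) := by
            apply mul_le_mul_of_nonneg_right h₀A (Nat.cast_nonneg _)
        _ = (K * #(A₀ + C)) * #A₀ := by ring
    exact le_of_mul_le_mul_right h3 hA₀pos
  have hN : ∀ W : Finset G, (#(A₀ + W + -A) : ℝ) ≤ K ^ 2 * #(A₀ + W) := by
    intro W
    have h1 : #(A₀ + W - A) * #A ≤ #(A₀ + W + A) * #(A + A) :=
      Finset.ruzsa_triangle_inequality_sub_add_add (A₀ + W) A A
    have h2 : A₀ + W + A = A₀ + A + W := by
      simp only [add_comm, add_left_comm, add_assoc]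
    have h3 : (#(A₀ + W - A) : ℝ) * #A ≤ (K * #(A₀ + W)) * (K * #A) := by
      calc (#(A₀ + W - A) : ℝ) * #A ≤ (#(A₀ + W + A) : ℝ) * #(A + A) := by
            exact_mod_cast h1
        _ = (#(A₀ + A + W) : ℝ) * #(A + A) := by rw [h2]
        _ ≤ (K * #(A₀ + W)) * (K * #A) := by
            rw [hK]
            apply mul_le_mul_of_nonneg_right (hP W) (by positivity)
    have h4 : (#(A₀ + W - A) : ℝ) * #A ≤ (K ^ 2 * #(A₀ + W)) * #A := by
      calc (#(A₀ + W - A) : ℝ) * #A ≤ (K * #(A₀ + W)) * (K * #A) := h3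
        _ = (K ^ 2 * #(A₀ + W)) * #A := by ring
    have h5 : (#(A₀ + W - A) : ℝ) ≤ K ^ 2 * #(A₀ + W) :=
      le_of_mul_le_mul_right h4 hApos
    rwa [sub_eq_add_neg] at h5
  have hDbl : ∀ Z : Finset G, (#(A₀ + dilate 2 Z) : ℝ) ≤ K ^ 6 * #(A₀ + Z) :=
    doubling A A₀ K hA hA₀ne hA₀A hK1 h₀A hP hN
  have hlog : ∀ i ∈ (Finset.univ : Finset (Fin h)), Nat.log 2 (lam i).natAbs ≤ r := by
    intro i _
    rw [hr]
    exact Finset.le_sup (f := fun j => Nat.log 2 (lam j).natAbs) (Finset.mem_univ i)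
  have hMain := main_induction A A₀ K hA hK1 hP hN hDbl r Finset.univ lam
    (fun i _ => hlam i) hlog
  have hfin1 : (#(∑ i, dilate (lam i) A) : ℝ) ≤ #(A₀ + ∑ i, dilate (lam i) A) := by
    exact_mod_cast Finset.card_le_card_add_left hA₀ne
  have hA₀leA : (#A₀ : ℝ) ≤ #A := by exact_mod_cast Finset.card_le_card hA₀A
  have hsum : ∑ i, s i = ∑ i, (Nat.digits 2 (lam i).natAbs).sum :=
    Finset.sum_congr rfl (fun i _ => hs i)
  calc (#(∑ i, dilate (lam i) A) : ℝ)
      ≤ K ^ (6 * r + 2 * ∑ i, (Nat.digits 2 (lam i).natAbs).sum) * #A₀ :=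
        hfin1.trans hMain
    _ ≤ K ^ (7 + 10 * r + 2 * ∑ i, s i) * #A := by
        rw [hsum]
        apply mul_le_mul (pow_le_pow_right₀ hK1 (by omega)) hA₀leA
          (Nat.cast_nonneg _) (by positivity)
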